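/- Let A be a binary linear code of even length n and dimension K, and let a ∉ A. With Bᵢ the number of weight-i words in A⊥, bᵢ the number of weight-i words in A⊥ orthogonal to a, d_{n/2} the number of balanced words in A + a, and B(A) the number of balanced words in A, one has B(A) - d_{n/2} = 2^{K-n+1} Σᵢ (Bᵢ - bᵢ) K(i,n), where K(i,n) = Σⱼ (-1)^j C(i,j) C(n-i, n/2-j). -/

import Mathlib

/-- Hamming weight of a vector in F₂ⁿ. -/
def wt {n : ℕ} (v : Fin n → ZMod 2) : ℕ :=
  (Finset.univ.filter fun j => v j ≠ 0).card

/-- Dual code: vectors orthogonal to every codeword. -/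
def dualSet {n : ℕ} (A : Submodule (ZMod 2) (Fin n → ZMod 2)) : Set (Fin n → ZMod 2) :=
  {u | ∀ c ∈ A, ∑ j, u j * c j = 0}

/-- Krawtchouk value K(i,n). -/
def Kw (i n : ℕ) : ℤ :=
  ∑ j ∈ Finset.range (i + 1),
    if j ≤ n / 2 then (-1 : ℤ) ^ j * (i.choose j) * ((n - i).choose (n / 2 - j)) else 0

open Finset
open scoped Classical

section Auxiliary

noncomputable def eps (x : ZMod 2) : ℚ := if x = 0 then 1 else -1

lemma zmod2_cases (x : ZMod 2) : x = 0 ∨ x = 1 := by revert x; decide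

lemma eps_add (x y : ZMod 2) : eps (x + y) = eps x * eps y := by
  rcases zmod2_cases x with hx|hx <;> rcases zmod2_cases y with hy|hy <;>
    subst hx <;> subst hy <;> norm_num [eps] <;> decide

lemma eps_sum {ι : Type*} (T : Finset ι) (f : ι → ZMod 2) :
    eps (∑ j ∈ T, f j) = ∏ j ∈ T, eps (f j) := by
  induction T using Finset.cons_induction with
  | empty => simp [eps]
  | cons a s ha ih => rw [Finset.sum_cons, Finset.prod_cons, eps_add, ih]

lemma count_lemma {α : Type*} [Fintype α] [DecidableEq α] (S : Finset α) (m j : ℕ) (hj : j ≤ m) :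
    ((Finset.univ.powersetCard m).filter fun T : Finset α => (T ∩ S).card = j).card
      = S.card.choose j * ((Fintype.card α - S.card).choose (m - j)) := by
  rw [show S.card.choose j * ((Fintype.card α - S.card).choose (m - j))
      = ((S.powersetCard j) ×ˢ (Sᶜ.powersetCard (m - j))).card by
    rw [Finset.card_product, Finset.card_powersetCard, Finset.card_powersetCard,
      Finset.card_compl]]
  apply Finset.card_nbij' (fun T => (T ∩ S, T \ S)) (fun P => P.1 ∪ P.2)
  · intro T hT
    simp only [Finset.mem_coe, Finset.mem_filter, Finset.mem_powersetCard] at hT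
    obtain ⟨⟨-, hcard⟩, hfib⟩ := hT
    simp only [Finset.mem_coe, Finset.mem_product, Finset.mem_powersetCard]
    refine ⟨⟨Finset.inter_subset_right, hfib⟩, ?_, ?_⟩
    · intro x hx
      simp only [Finset.mem_sdiff] at hx
      simp [hx.2]
    · have := Finset.card_inter_add_card_sdiff T S
      omega
  · intro P hP
    simp only [Finset.mem_coe, Finset.mem_product, Finset.mem_powersetCard] at hP
    obtain ⟨⟨hP1, hc1⟩, hP2, hc2⟩ := hP
    have hdisj : Disjoint P.1 P.2 := by
      rw [Finset.disjoint_left]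
      intro x hx1 hx2
      have := hP2 hx2
      simp only [Finset.mem_compl] at this
      exact this (hP1 hx1)
    have huni : (P.1 ∪ P.2) ∩ S = P.1 := by
      ext x
      simp only [Finset.mem_inter, Finset.mem_union]
      constructor
      · rintro ⟨hx1 | hx2, hxS⟩
        · exact hx1
        · exact absurd hxS (by simpa using hP2 hx2)
      · intro hx
        exact ⟨Or.inl hx, hP1 hx⟩
    simp only [Finset.mem_coe, Finset.mem_filter, Finset.mem_powersetCard]
    refine ⟨⟨Finset.subset_univ _, ?_⟩, by rw [huni, hc1]⟩
    rw [Finset.card_union_of_disjoint hdisj, hc1, hc2]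
    omega
  · intro T hT
    simp only [Finset.mem_coe, Finset.mem_filter, Finset.mem_powersetCard] at hT
    beta_reduce; rw [Finset.union_comm]
    exact Finset.sdiff_union_inter T S
  · intro P hP
    simp only [Finset.mem_coe, Finset.mem_product, Finset.mem_powersetCard] at hP
    obtain ⟨⟨hP1, hc1⟩, hP2, hc2⟩ := hP
    have huni : (P.1 ∪ P.2) ∩ S = P.1 := by
      ext x
      simp only [Finset.mem_inter, Finset.mem_union]
      constructor
      · rintro ⟨hx1 | hx2, hxS⟩
        · exact hx1
        · exact absurd hxS (by simpa using hP2 hx2)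
      · intro hx
        exact ⟨Or.inl hx, hP1 hx⟩
    have hsd : (P.1 ∪ P.2) \ S = P.2 := by
      ext x
      simp only [Finset.mem_sdiff, Finset.mem_union]
      constructor
      · rintro ⟨hx1 | hx2, hxS⟩
        · exact absurd (hP1 hx1) hxS
        · exact hx2
      · intro hx
        exact ⟨Or.inr hx, by simpa using hP2 hx⟩
    beta_reduce; rw [huni, hsd]

lemma kraw_count {α : Type*} [Fintype α] [DecidableEq α] (S : Finset α) (m : ℕ) :
    ∑ T ∈ Finset.univ.powersetCard m, (-1 : ℚ) ^ (T ∩ S).card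
      = ∑ j ∈ Finset.range (S.card + 1),
          if j ≤ m then
            (-1 : ℚ) ^ j * (S.card.choose j) * ((Fintype.card α - S.card).choose (m - j))
          else 0 := by
  rw [← Finset.sum_fiberwise_of_maps_to (g := fun T : Finset α => (T ∩ S).card)
      (t := Finset.range (S.card + 1))
      (fun T _ => Finset.mem_range.mpr
        (Nat.lt_succ_of_le (Finset.card_le_card Finset.inter_subset_right)))]
  refine Finset.sum_congr rfl fun j hj => ?_
  by_cases hjm : j ≤ m
  · rw [if_pos hjm]
    have : ∀ T ∈ (Finset.univ.powersetCard m).filter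
        (fun T : Finset α => (T ∩ S).card = j), (-1 : ℚ) ^ (T ∩ S).card = (-1 : ℚ) ^ j := by
      intro T hT
      rw [(Finset.mem_filter.mp hT).2]
    rw [Finset.sum_congr rfl this, Finset.sum_const, count_lemma S m j hjm, nsmul_eq_mul]
    push_cast
    ring
  · rw [if_neg hjm]
    have : (Finset.univ.powersetCard m).filter
        (fun T : Finset α => (T ∩ S).card = j) = ∅ := by
      rw [Finset.filter_eq_empty_iff]
      intro T hT
      have hTm : T.card = m := (Finset.mem_powersetCard.mp hT).2
      have : (T ∩ S).card ≤ m := hTm ▸ Finset.card_le_card Finset.inter_subset_left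
      omega
    rw [this, Finset.sum_empty]

lemma eps_dot {n : ℕ} (u v : Fin n → ZMod 2) :
    eps (∑ j, u j * v j)
      = (-1 : ℚ) ^ (((univ.filter fun j => v j ≠ 0) : Finset (Fin n))
          ∩ (univ.filter fun j => u j ≠ 0)).card := by
  rw [eps_sum]
  have h1 : ∀ j : Fin n, eps (u j * v j) = if u j * v j = 0 then (1:ℚ) else -1 :=
    fun j => rfl
  rw [Finset.prod_congr rfl fun j _ => h1 j, Finset.prod_ite, Finset.prod_const,
    Finset.prod_const, one_pow, one_mul]
  congr 2
  ext j
  simp only [Finset.mem_filter, Finset.mem_inter, Finset.mem_univ, true_and, mul_eq_zero]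
  tauto

lemma kraw {n : ℕ} (u : Fin n → ZMod 2) (m : ℕ) :
    ∑ v ∈ univ.filter (fun v : Fin n → ZMod 2 => wt v = m), eps (∑ j, u j * v j)
      = ∑ j ∈ Finset.range (wt u + 1),
          if j ≤ m then (-1:ℚ)^j * ((wt u).choose j) * ((n - wt u).choose (m - j)) else 0 := by
  have key : ∑ v ∈ univ.filter (fun v : Fin n → ZMod 2 => wt v = m), eps (∑ j, u j * v j)
      = ∑ T ∈ Finset.univ.powersetCard m,
          (-1 : ℚ) ^ (T ∩ (univ.filter fun j => u j ≠ 0)).card := by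
    apply Finset.sum_nbij' (i := fun v : Fin n → ZMod 2 => univ.filter fun j => v j ≠ 0)
      (j := fun T k => if k ∈ T then 1 else 0)
    · intro v hv
      simp only [Finset.mem_filter, Finset.mem_univ, true_and] at hv
      exact Finset.mem_powersetCard.mpr ⟨Finset.subset_univ _, hv⟩
    · intro T hT
      rw [Finset.mem_filter]
      simp only [Finset.mem_filter, Finset.mem_univ, true_and, wt]
      rw [← (Finset.mem_powersetCard.mp hT).2]
      congr 1
      ext k
      simp only [Finset.mem_filter, Finset.mem_univ, true_and]
      split_ifs with h <;> simp [h]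
    · intro v hv
      funext k
      by_cases h : v k = 0 <;> simp [h]
      exact ((zmod2_cases (v k)).resolve_left h).symm
    · intro T hT
      ext k
      simp only [Finset.mem_filter, Finset.mem_univ, true_and]
      split_ifs with h <;> simp [h]
    · intro v hv
      exact eps_dot u v
  rw [key, kraw_count]
  have hw : wt u = ((univ.filter fun j => u j ≠ 0) : Finset (Fin n)).card := rfl
  rw [← hw, Fintype.card_fin]

variable {n : ℕ} (A : Submodule (ZMod 2) (Fin n → ZMod 2))

/-- The linear map sending `u` to the functional `c ↦ ∑ u j * c j` on `A`. -/
noncomputable def phi : (Fin n → ZMod 2) →ₗ[ZMod 2] Module.Dual (ZMod 2) A where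
  toFun u :=
    { toFun := fun c => ∑ j, u j * (c : Fin n → ZMod 2) j
      map_add' := by
        intro c d
        simp [mul_add, Finset.sum_add_distrib]
      map_smul' := by
        intro r c
        simp only [SetLike.val_smul, Pi.smul_apply, smul_eq_mul, RingHom.id_apply]
        rw [Finset.mul_sum]
        exact Finset.sum_congr rfl fun j _ => by ring }
  map_add' u w := by
    ext c
    simp [add_mul, Finset.sum_add_distrib]
  map_smul' r u := by
    ext c
    simp [Finset.mul_sum, smul_eq_mul, mul_assoc]

lemma mem_ker_phi (u : Fin n → ZMod 2) : u ∈ LinearMap.ker (phi A) ↔ u ∈ dualSet A := by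
  simp only [LinearMap.mem_ker]
  constructor
  · intro h c hc
    have := congrArg (fun f => f ⟨c, hc⟩) h
    simpa [phi] using this
  · intro h
    ext c
    simpa [phi] using h c c.2

lemma phi_surjective : Function.Surjective (phi A) := by
  intro f
  obtain ⟨g, hg⟩ := LinearMap.exists_extend f
  refine ⟨fun j => g (fun k => if j = k then 1 else 0), ?_⟩
  ext c
  have := LinearMap.pi_apply_eq_sum_univ g (c : Fin n → ZMod 2)
  simp only [phi, LinearMap.coe_mk, AddHom.coe_mk]
  rw [show (∑ j, g (fun k => if j = k then 1 else 0) * (c : Fin n → ZMod 2) j)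
      = g (c : Fin n → ZMod 2) by
    rw [this]
    exact Finset.sum_congr rfl fun j _ => by rw [smul_eq_mul, mul_comm]]
  have := congrArg (fun h => h c) hg
  simpa using this

lemma finrank_dual_ker : Module.finrank (ZMod 2) (LinearMap.ker (phi A))
    = n - Module.finrank (ZMod 2) A := by
  have h1 := LinearMap.finrank_range_add_finrank_ker (phi A)
  have h2 : LinearMap.range (phi A) = ⊤ := LinearMap.range_eq_top.mpr (phi_surjective A)
  rw [h2, finrank_top] at h1
  have h3 : Module.finrank (ZMod 2) (Module.Dual (ZMod 2) A)
      = Module.finrank (ZMod 2) A := Subspace.dual_finrank_eq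
  have h4 : Module.finrank (ZMod 2) (Fin n → ZMod 2) = n := by
    simp [Module.finrank_pi]
  omega

lemma card_dualSet : Nat.card (dualSet A) = 2 ^ (n - Module.finrank (ZMod 2) A) := by
  have : dualSet A = (LinearMap.ker (phi A) : Set (Fin n → ZMod 2)) := by
    ext u
    exact (mem_ker_phi A u).symm
  rw [this, SetLike.coe_sort_coe]
  letI : Fintype (LinearMap.ker (phi A)) := Fintype.ofFinite _
  rw [Nat.card_eq_fintype_card, Module.card_eq_pow_finrank (K := ZMod 2), ZMod.card,
    finrank_dual_ker]

lemma separation (v : Fin n → ZMod 2)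
    (hv : v ∉ A) : ∃ u ∈ dualSet A, ∑ j, u j * v j = 1 := by
  have h1 : (Submodule.Quotient.mk v : (Fin n → ZMod 2) ⧸ A) ≠ 0 := by
    simpa [Submodule.Quotient.mk_eq_zero] using hv
  have h2 : ¬ ∀ f : Module.Dual (ZMod 2) ((Fin n → ZMod 2) ⧸ A),
      f (Submodule.Quotient.mk v) = 0 := by
    rw [Module.forall_dual_apply_eq_zero_iff]
    exact h1
  push_neg at h2
  obtain ⟨f, hf⟩ := h2
  set g : (Fin n → ZMod 2) →ₗ[ZMod 2] ZMod 2 := f.comp A.mkQ with hgdef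
  have hgv : g v ≠ 0 := by simpa [g, Submodule.mkQ_apply] using hf
  have hg0 : ∀ c ∈ A, g c = 0 := by
    intro c hc
    simp [g, Submodule.mkQ_apply, (Submodule.Quotient.mk_eq_zero A).mpr hc]
  refine ⟨fun j => g (fun k => if j = k then 1 else 0), ?_, ?_⟩
  · intro c hc
    rw [show (∑ j, g (fun k => if j = k then 1 else 0) * c j) = g c by
      rw [LinearMap.pi_apply_eq_sum_univ g c]
      exact Finset.sum_congr rfl fun j _ => by rw [smul_eq_mul, mul_comm]]
    exact hg0 c hc
  · rw [show (∑ j, g (fun k => if j = k then 1 else 0) * v j) = g v by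
      rw [LinearMap.pi_apply_eq_sum_univ g v]
      exact Finset.sum_congr rfl fun j _ => by rw [smul_eq_mul, mul_comm]]
    exact (zmod2_cases (g v)).resolve_left hgv

noncomputable def Dfin : Finset (Fin n → ZMod 2) := univ.filter (· ∈ dualSet A)

lemma mem_Dfin (u : Fin n → ZMod 2) : u ∈ Dfin A ↔ u ∈ dualSet A := by
  simp [Dfin]

lemma card_Dfin : (Dfin A).card = 2 ^ (n - Module.finrank (ZMod 2) A) := by
  rw [← card_dualSet A, Nat.card_eq_fintype_card]
  rw [Dfin]
  exact (Fintype.card_subtype _).symm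

lemma dual_add {u w : Fin n → ZMod 2} (hu : u ∈ dualSet A) (hw : w ∈ dualSet A) :
    u + w ∈ dualSet A := by
  intro c hc
  have : ∑ j, (u j + w j) * c j = (∑ j, u j * c j) + ∑ j, w j * c j := by
    rw [← Finset.sum_add_distrib]
    exact Finset.sum_congr rfl fun j _ => by ring
  have h2 : ∀ j, (u + w) j * c j = (u j + w j) * c j := fun j => rfl
  rw [Finset.sum_congr rfl fun j _ => h2 j, this, hu c hc, hw c hc, add_zero]

lemma dot_add_right (u v w : Fin n → ZMod 2) :
    ∑ j, u j * (v + w) j = (∑ j, u j * v j) + ∑ j, u j * w j := by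
  rw [← Finset.sum_add_distrib]
  exact Finset.sum_congr rfl fun j _ => by simp [mul_add]

lemma vec_add_self (u : Fin n → ZMod 2) : u + u = 0 := by
  funext j
  simp only [Pi.add_apply, Pi.zero_apply]
  rcases zmod2_cases (u j) with h | h <;> rw [h] <;> decide

lemma char_sum (v : Fin n → ZMod 2) :
    ∑ u ∈ Dfin A, eps (∑ j, u j * v j)
      = if v ∈ A then (2 : ℚ) ^ (n - Module.finrank (ZMod 2) A) else 0 := by
  by_cases hv : v ∈ A
  · rw [if_pos hv]
    have : ∀ u ∈ Dfin A, eps (∑ j, u j * v j) = 1 := by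
      intro u hu
      rw [(mem_Dfin A u).mp hu v hv]
      simp [eps]
    rw [Finset.sum_congr rfl this, Finset.sum_const, card_Dfin, nsmul_eq_mul, mul_one]
    push_cast
    ring
  · rw [if_neg hv]
    obtain ⟨u₀, hu₀, hdot⟩ := separation A v hv
    have key : ∑ u ∈ Dfin A, eps (∑ j, (u + u₀) j * v j)
        = ∑ u ∈ Dfin A, eps (∑ j, u j * v j) := by
      apply Finset.sum_nbij' (i := (· + u₀)) (j := (· + u₀))
      · intro u hu
        exact (mem_Dfin A _).mpr (dual_add A ((mem_Dfin A u).mp hu) hu₀)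
      · intro u hu
        exact (mem_Dfin A _).mpr (dual_add A ((mem_Dfin A u).mp hu) hu₀)
      · intro u hu
        rw [add_assoc, vec_add_self, add_zero]
      · intro u hu
        rw [add_assoc, vec_add_self, add_zero]
      · intro u hu
        rfl
    have neg : ∀ u : Fin n → ZMod 2,
        eps (∑ j, (u + u₀) j * v j) = - eps (∑ j, u j * v j) := by
      intro u
      have h2 : ∀ j, (u + u₀) j * v j = (u j * v j) + (u₀ j * v j) := fun j => by
        simp [Pi.add_apply, add_mul]
      rw [Finset.sum_congr rfl fun j _ => h2 j, Finset.sum_add_distrib, eps_add, hdot]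
      have : eps 1 = -1 := by norm_num [eps]
      rw [this]
      ring
    have : ∑ u ∈ Dfin A, eps (∑ j, u j * v j)
        = - ∑ u ∈ Dfin A, eps (∑ j, u j * v j) := by
      conv_lhs => rw [← key]
      rw [Finset.sum_congr rfl fun u _ => neg u, Finset.sum_neg_distrib]
    linarith

end Auxiliary

theorem balanced_difference_identity (n Kdim : ℕ) (hn : Even n) (hpos : 0 < n)
    (A : Submodule (ZMod 2) (Fin n → ZMod 2))
    (hK : Module.finrank (ZMod 2) A = Kdim)
    (a : Fin n → ZMod 2) (ha : a ∉ A)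
    (B b : ℕ → ℕ)
    (hB : ∀ i, B i = {u | u ∈ dualSet A ∧ wt u = i}.ncard)
    (hb : ∀ i, b i = {u | u ∈ dualSet A ∧ (∑ j, u j * a j) = 0 ∧ wt u = i}.ncard)
    (dbal BA : ℕ)
    (hdbal : dbal = {v | (∃ c ∈ A, v = c + a) ∧ wt v = n / 2}.ncard)
    (hBA : BA = {v | v ∈ A ∧ wt v = n / 2}.ncard) :
    (BA : ℚ) - (dbal : ℚ) =
      (2 : ℚ) ^ ((Kdim : ℤ) - (n : ℤ) + 1) *
        ∑ i ∈ Finset.range (n + 1), ((B i : ℚ) - (b i : ℚ)) * (Kw i n : ℚ) := by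
  classical
  subst hK
  set K' := Module.finrank (ZMod 2) A with hK'
  -- ncard to filter card
  have ncard_filter : ∀ (p : (Fin n → ZMod 2) → Prop) [inst : DecidablePred p],
      {x | p x}.ncard = (univ.filter p).card := by
    intro p inst
    rw [← Set.ncard_coe_finset]
    congr 1
    ext x
    simp
  have hKn : K' ≤ n := by
    have h1 := Submodule.finrank_le A
    have h2 : Module.finrank (ZMod 2) (Fin n → ZMod 2) = n := by
      simp [Module.finrank_pi]
    omega
  set m := n / 2 with hm
  set E : Finset (Fin n → ZMod 2) :=
    (Dfin A).filter (fun u => (∑ j, u j * a j) ≠ 0) with hE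
  -- Step 1: B i - b i = card of fiber of E
  have step1 : ∀ i, (B i : ℚ) - (b i : ℚ) = ((E.filter fun u => wt u = i).card : ℚ) := by
    intro i
    have hsplit : b i + (E.filter fun u => wt u = i).card = B i := by
      rw [hB, hb, ncard_filter, ncard_filter]
      rw [← Finset.card_filter_add_card_filter_not
        (p := fun u : Fin n → ZMod 2 => (∑ j, u j * a j) = 0)
        (s := univ.filter fun u => u ∈ dualSet A ∧ wt u = i)]
      congr 1
      · apply congrArg
        ext u
        simp only [Finset.mem_filter, Finset.mem_univ, true_and]
        tauto
      · apply congrArg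
        ext u
        simp only [hE, Finset.mem_filter, Finset.mem_univ, true_and, mem_Dfin]
        tauto
    have := congrArg (fun k : ℕ => (k : ℚ)) hsplit
    push_cast at this
    linarith
  rw [Finset.sum_congr rfl fun i _ => by rw [step1 i]]
  -- Step 2: fiberwise sum
  have hwt_le : ∀ u : Fin n → ZMod 2, wt u ≤ n := by
    intro u
    have h1 : (univ.filter fun j => u j ≠ 0).card ≤ (univ : Finset (Fin n)).card :=
      Finset.card_filter_le _ _
    simpa [wt] using h1
  have step2 : ∑ i ∈ Finset.range (n + 1),
        (((E.filter fun u => wt u = i).card : ℚ)) * (Kw i n : ℚ)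
      = ∑ u ∈ E, (Kw (wt u) n : ℚ) := by
    rw [← Finset.sum_fiberwise_of_maps_to (g := wt) (t := Finset.range (n + 1))
      (fun u _ => Finset.mem_range.mpr (Nat.lt_succ_of_le (hwt_le u)))
      (f := fun u => (Kw (wt u) n : ℚ))]
    refine Finset.sum_congr rfl fun i _ => ?_
    have : ∀ u ∈ E.filter fun u => wt u = i, (Kw (wt u) n : ℚ) = (Kw i n : ℚ) := by
      intro u hu
      rw [(Finset.mem_filter.mp hu).2]
    rw [Finset.sum_congr rfl this, Finset.sum_const, nsmul_eq_mul]
  rw [step2]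
  -- Step 3: Krawtchouk as character sum
  have hKw : ∀ u : Fin n → ZMod 2, (Kw (wt u) n : ℚ)
      = ∑ v ∈ univ.filter (fun v : Fin n → ZMod 2 => wt v = m), eps (∑ j, u j * v j) := by
    intro u
    rw [kraw u m, Kw]
    rw [Int.cast_sum]
    refine (Finset.sum_congr rfl fun j _ => ?_).symm
    rw [hm]
    split_ifs with h
    · push_cast
      ring
    · norm_num
  rw [Finset.sum_congr rfl fun u (_ : u ∈ E) => hKw u]
  rw [Finset.sum_comm]
  -- Step 4: inner sum over E
  set Sv : (Fin n → ZMod 2) → ℚ := fun w => ∑ u ∈ Dfin A, eps (∑ j, u j * w j) with hSv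
  have step4 : ∀ v : Fin n → ZMod 2,
      ∑ u ∈ E, eps (∑ j, u j * v j) = (Sv v - Sv (v + a)) / 2 := by
    intro v
    have hsplitD := Finset.sum_filter_add_sum_filter_not (Dfin A)
      (fun u => (∑ j, u j * a j) ≠ 0) (fun u => eps (∑ j, u j * v j))
    have hsplitD2 := Finset.sum_filter_add_sum_filter_not (Dfin A)
      (fun u => (∑ j, u j * a j) ≠ 0) (fun u => eps (∑ j, u j * (v + a) j))
    have hterm : ∀ u : Fin n → ZMod 2,
        eps (∑ j, u j * (v + a) j) = eps (∑ j, u j * v j) * eps (∑ j, u j * a j) := by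
      intro u
      rw [dot_add_right, eps_add]
    have hE1 : ∑ u ∈ (Dfin A).filter (fun u => (∑ j, u j * a j) ≠ 0),
        eps (∑ j, u j * (v + a) j)
        = - ∑ u ∈ E, eps (∑ j, u j * v j) := by
      rw [← Finset.sum_neg_distrib]
      refine Finset.sum_congr rfl fun u hu => ?_
      rw [hterm u]
      have h0 : (∑ j, u j * a j) = 1 :=
        (zmod2_cases _).resolve_left (Finset.mem_filter.mp hu).2
      rw [h0]
      have : eps 1 = -1 := by norm_num [eps]
      rw [this]
      ring
    have hE2 : ∑ u ∈ (Dfin A).filter (fun u => ¬ (∑ j, u j * a j) ≠ 0),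
        eps (∑ j, u j * (v + a) j)
        = ∑ u ∈ (Dfin A).filter (fun u => ¬ (∑ j, u j * a j) ≠ 0),
            eps (∑ j, u j * v j) := by
      refine Finset.sum_congr rfl fun u hu => ?_
      rw [hterm u]
      have h0 : (∑ j, u j * a j) = 0 := by
        have := (Finset.mem_filter.mp hu).2
        push_neg at this
        exact this
      rw [h0]
      have : eps 0 = 1 := by norm_num [eps]
      rw [this, mul_one]
    rw [hE1, hE2] at hsplitD2
    rw [← hE] at hsplitD
    have h1 : Sv v = ∑ u ∈ E, eps (∑ j, u j * v j)
        + ∑ u ∈ (Dfin A).filter (fun u => ¬ (∑ j, u j * a j) ≠ 0),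
            eps (∑ j, u j * v j) := hsplitD.symm
    have h3 : Sv (v + a) = ∑ u ∈ Dfin A, eps (∑ j, u j * (v + a) j) := rfl
    rw [h3] at *
    linarith [hsplitD2, h1]
  rw [Finset.sum_congr rfl fun v (_ : v ∈ univ.filter
      (fun v : Fin n → ZMod 2 => wt v = m)) => step4 v]
  -- Step 5: sums of Sv over balanced words
  have hSvA : ∀ v : Fin n → ZMod 2, Sv v = if v ∈ A then (2 : ℚ) ^ (n - K') else 0 :=
    fun v => char_sum A v
  have step5 : ∑ v ∈ univ.filter (fun v : Fin n → ZMod 2 => wt v = m), Sv v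
      = (BA : ℚ) * (2 : ℚ) ^ (n - K') := by
    rw [Finset.sum_congr rfl fun v _ => hSvA v, Finset.sum_ite, Finset.sum_const,
      Finset.sum_const_zero, add_zero, nsmul_eq_mul, hBA, ncard_filter]
    congr! 3
    ext v
    simp only [Finset.mem_filter, Finset.mem_univ, true_and]
    tauto
  have step6 : ∑ v ∈ univ.filter (fun v : Fin n → ZMod 2 => wt v = m), Sv (v + a)
      = (dbal : ℚ) * (2 : ℚ) ^ (n - K') := by
    rw [Finset.sum_congr rfl fun v _ => hSvA (v + a), Finset.sum_ite, Finset.sum_const,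
      Finset.sum_const_zero, add_zero, nsmul_eq_mul, hdbal, ncard_filter]
    congr! 3
    ext v
    simp only [Finset.mem_filter, Finset.mem_univ, true_and]
    constructor
    · rintro ⟨hw, hva⟩
      exact ⟨⟨v + a, hva, by rw [add_assoc, vec_add_self, add_zero]⟩, hw⟩
    · rintro ⟨⟨c, hc, rfl⟩, hw⟩
      exact ⟨hw, by rwa [add_assoc, vec_add_self, add_zero]⟩
  -- Step 6: final arithmetic
  rw [← Finset.sum_div, Finset.sum_sub_distrib, step5, step6]
  have hexp : ((K' : ℤ) - (n : ℤ) + 1) + ((n : ℤ) - (K' : ℤ)) = 1 := by ring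
  have hc : (2 : ℚ) ^ ((K' : ℤ) - (n : ℤ) + 1) * (2 : ℚ) ^ (n - K' : ℕ) = 2 := by
    rw [← zpow_natCast (2 : ℚ) (n - K'), ← zpow_add₀ (by norm_num : (2 : ℚ) ≠ 0),
      Nat.cast_sub hKn, hexp, zpow_one]
  linear_combination (((dbal : ℚ) - (BA : ℚ)) / 2) * hc
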